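/- Let M ≥ 2, let G11, G12 be M×M real matrices, and let v_{R1,1}, …, v_{R1,M} and v_{R2,1}, …, v_{R2,M−1} be vectors in ℝ^M satisfying G11·v_{R1,i+1} = −G12·v_{R2,i} for all i ∈ {1, …, M−1}. Then for all real scalars x_{1,1}, …, x_{1,M} and x_{2,1}, …, x_{2,M−1} (with the convention x_{2,0} = 0): G11·(Σ_{k=1}^{M} v_{R1,k}·(x_{1,k} + x_{2,k−1})) + G12·(Σ_{k=1}^{M−1} v_{R2,k}·(x_{1,k} + x_{2,k})) = G11·v_{R1,1}·x_{1,1} + Σ_{i=1}^{M−1} G11·v_{R1,i+1}·(x_{1,i+1} − x_{1,i}). In particular, all symbols x_{2,k} of the second source are cancelled at the first destination. -/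

import Mathlib

open Matrix Finset

/-- Over-the-air interference neutralization at destination `D1`: if
`G11 v_{R1,i+1} = −G12 v_{R2,i}` for `i ∈ {1,…,M-1}`, then the superposition of
the two relays' transmissions contains no symbol of the second source. -/
theorem neutralization_at_D1 (M : ℕ) (hM : 2 ≤ M)
    (G11 G12 : Matrix (Fin M) (Fin M) ℝ)
    (vR1 : ℕ → Fin M → ℝ) (vR2 : ℕ → Fin M → ℝ)
    (hneu : ∀ i ∈ Finset.Icc 1 (M - 1),
      G11.mulVec (vR1 (i + 1)) = -(G12.mulVec (vR2 i)))
    (x1 : ℕ → ℝ) (x2 : ℕ → ℝ) (hx20 : x2 0 = 0) :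
    G11.mulVec (∑ k ∈ Finset.Icc 1 M, (x1 k + x2 (k - 1)) • vR1 k) +
      G12.mulVec (∑ k ∈ Finset.Icc 1 (M - 1), (x1 k + x2 k) • vR2 k) =
    x1 1 • G11.mulVec (vR1 1) +
      ∑ i ∈ Finset.Icc 1 (M - 1), (x1 (i + 1) - x1 i) • G11.mulVec (vR1 (i + 1)) := by
  have hlin : ∀ (A : Matrix (Fin M) (Fin M) ℝ) (s : Finset ℕ) (c : ℕ → ℝ) (v : ℕ → Fin M → ℝ),
      A.mulVec (∑ k ∈ s, c k • v k) = ∑ k ∈ s, c k • A.mulVec (v k) := by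
    intro A s c v
    induction s using Finset.induction with
    | empty => simp
    | insert _ _ h ih =>
      rw [Finset.sum_insert h, Matrix.mulVec_add, Matrix.mulVec_smul, ih, Finset.sum_insert h]
  rw [hlin, hlin]
  -- split off the k = 1 term of the first sum
  have hsplit : Finset.Icc 1 M = insert 1 (Finset.Ioc 1 M) := by
    rw [← Finset.Icc_erase_left,
      Finset.insert_erase (Finset.mem_Icc.mpr ⟨le_refl 1, by omega⟩)]
  have hmap : Finset.Ioc 1 M = (Finset.Icc 1 (M - 1)).map (addRightEmbedding 1) := by
    rw [Finset.map_add_right_Icc]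
    have h1 : M - 1 + 1 = M := by omega
    rw [h1, ← Finset.Icc_add_one_left_eq_Ioc]
  rw [hsplit, Finset.sum_insert (by simp), hmap, Finset.sum_map]
  simp only [addRightEmbedding_apply]
  have hG12 : ∀ i ∈ Finset.Icc 1 (M - 1),
      (x1 i + x2 i) • G12.mulVec (vR2 i) = -((x1 i + x2 i) • G11.mulVec (vR1 (i + 1))) := by
    intro i hi
    have := hneu i hi
    have h2 : G12.mulVec (vR2 i) = -(G11.mulVec (vR1 (i + 1))) := by
      rw [this, neg_neg]
    rw [h2, smul_neg]
  rw [Finset.sum_congr rfl hG12, hx20, add_zero]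
  rw [add_assoc, ← Finset.sum_add_distrib]
  congr 1
  apply Finset.sum_congr rfl
  intro i _
  simp only [Nat.add_sub_cancel]
  module
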